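/- Consider n teams located at points t_1 < t_2 < ... < t_n on a line, with d_i the distance between t_i and t_{i+1}. In any feasible TTP-k schedule (each team's travel is a sequence of road trips from home visiting at most k opponents before returning), the total travel distance of all teams is at least Σ_{i=1}^{n−1} c_i·d_i, where c_i = 2·i·⌈(n−i)/k⌉ + 2·(n−i)·⌈i/k⌉. The key counting step: each of the i teams left of the gap (t_i, t_{i+1}) needs at least ⌈(n−i)/k⌉ round trips crossing this gap, and each of the n−i teams on the right needs at least ⌈i/k⌉ such round trips, and every round trip crosses the gap twice. -/

import Mathlib

/-- The travel cost of walking along a list of positions (indexed in `ℕ`) on the line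
with coordinates `t`. -/
def lineWalkCost (t : ℕ → ℝ) (l : List ℕ) : ℝ :=
  ((l.zip l.tail).map (fun p => |t p.1 - t p.2|)).sum

/-- number of adjacent pairs in `l` where `g` changes value -/
def crossCount (g : ℕ → Bool) (l : List ℕ) : ℕ :=
  ((l.zip l.tail).countP (fun q => g q.1 != g q.2))

lemma sum_map_ite (L : List (ℕ × ℕ)) (P : ℕ × ℕ → Bool) (d : ℝ) :
    (L.map (fun p => if P p then d else 0)).sum = (L.countP P) * d := by
  induction L with
  | nil => simp
  | cons h tl ih =>
      by_cases hP : P h <;> simp [List.countP_cons, hP, ih] <;> ring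

lemma sum_map_comm {α : Type*} (L : List α) (s : Finset ℕ) (f : α → ℕ → ℝ) :
    (L.map (fun p => ∑ j ∈ s, f p j)).sum = ∑ j ∈ s, (L.map (fun p => f p j)).sum := by
  induction L with
  | nil => simp
  | cons h tl ih => simp [ih, Finset.sum_add_distrib]

lemma gapsum_mono (t : ℕ → ℝ) (hmono : Monotone t) (a b : ℕ) (hab : a ≤ b) :
    ∑ j ∈ Finset.Ico a b, (t (j + 1) - t j) = t b - t a := by
  rw [Finset.sum_Ico_eq_sub _ hab, Finset.sum_range_sub, Finset.sum_range_sub]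
  ring

lemma abs_eq_gapsum_le (n : ℕ) (t : ℕ → ℝ) (hmono : Monotone t)
    (a b : ℕ) (hab : a ≤ b) (hb : b < n) :
    |t a - t b| = ∑ j ∈ Finset.range (n - 1),
      if (decide (j < a) != decide (j < b)) then (t (j + 1) - t j) else 0 := by
  have h1 : |t a - t b| = t b - t a := by
    rw [abs_sub_comm, abs_of_nonneg (by linarith [hmono hab])]
  rw [h1, ← gapsum_mono t hmono a b hab, ← Finset.sum_filter]
  apply Finset.sum_congr
  · ext j
    simp only [Finset.mem_filter, Finset.mem_range, Finset.mem_Ico, bne_iff_ne, ne_eq,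
      decide_eq_decide]
    omega
  · intros; rfl

lemma abs_eq_gapsum (n : ℕ) (t : ℕ → ℝ) (hmono : Monotone t)
    (a b : ℕ) (ha : a < n) (hb : b < n) :
    |t a - t b| = ∑ j ∈ Finset.range (n - 1),
      if (decide (j < a) != decide (j < b)) then (t (j + 1) - t j) else 0 := by
  rcases Nat.le_total a b with h | h
  · exact abs_eq_gapsum_le n t hmono a b h hb
  · rw [abs_sub_comm]
    rw [abs_eq_gapsum_le n t hmono b a h ha]
    apply Finset.sum_congr rfl
    intro j _
    have hc : ∀ x y : Bool, (x != y) = (y != x) := by decide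
    rw [hc]

lemma lineWalkCost_eq (n : ℕ) (t : ℕ → ℝ) (hmono : Monotone t)
    (l : List ℕ) (hl : ∀ x ∈ l, x < n) :
    lineWalkCost t l = ∑ j ∈ Finset.range (n - 1),
      (crossCount (fun x => decide (j < x)) l : ℝ) * (t (j + 1) - t j) := by
  unfold lineWalkCost crossCount
  have key : ∀ p ∈ l.zip l.tail, |t p.1 - t p.2| = ∑ j ∈ Finset.range (n - 1),
      if (decide (j < p.1) != decide (j < p.2)) then (t (j + 1) - t j) else 0 := by
    rintro ⟨x, y⟩ hp
    have hx := (List.of_mem_zip hp).1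
    have hy := (List.of_mem_zip hp).2
    exact abs_eq_gapsum n t hmono x y (hl _ hx) (hl _ (List.mem_of_mem_tail hy))
  rw [List.map_congr_left key, sum_map_comm]
  apply Finset.sum_congr rfl
  intro j _
  rw [sum_map_ite]

lemma up_cross (g : ℕ → Bool) :
    ∀ (l : List ℕ) (h0 : ℕ), g h0 = false → (∃ x ∈ l, g x = true) →
      1 ≤ ((h0 :: l).zip l).countP (fun q => !g q.1 && g q.2) := by
  intro l
  induction l with
  | nil => rintro h0 _ ⟨x, hx, _⟩; simp at hx
  | cons h2 r ih =>
      rintro h0 h0f ⟨x, hx, hxt⟩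
      rw [List.zip_cons_cons, List.countP_cons]
      by_cases hg : g h2 = true
      · have : (!g h0 && g h2) = true := by simp [h0f, hg]
        simp [this]
      · have hxr : x ∈ r := by
          rcases List.mem_cons.mp hx with rfl | h
          · exact absurd hxt hg
          · exact h
        have := ih h2 (Bool.not_eq_true _ ▸ by simpa using hg) ⟨x, hxr, hxt⟩
        omega

lemma down_cross (g : ℕ → Bool) :
    ∀ (l : List ℕ) (h0 : ℕ), (∃ x ∈ h0 :: l, g x = true) →
      g (l.getLastD h0) = false →
      1 ≤ ((h0 :: l).zip l).countP (fun q => g q.1 && !g q.2) := by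
  intro l
  induction l with
  | nil =>
      rintro h0 ⟨x, hx, hxt⟩ hlast
      simp only [List.mem_singleton] at hx
      subst hx
      simp [List.getLastD_nil] at hlast
      simp [hlast] at hxt
  | cons h2 r ih =>
      rintro h0 hex hlast
      rw [List.zip_cons_cons, List.countP_cons]
      have hlast' : g (r.getLastD h2) = false := by
        rwa [List.getLastD_cons] at hlast
      by_cases hex2 : ∃ x ∈ h2 :: r, g x = true
      · have := ih h2 hex2 hlast'
        omega
      · push_neg at hex2
        obtain ⟨x, hx, hxt⟩ := hex
        have hx0 : x = h0 := by
          rcases List.mem_cons.mp hx with rfl | h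
          · rfl
          · exact absurd hxt (by simpa using hex2 x h)
        subst hx0
        have h2f : g h2 = false := by simpa using hex2 h2 (by simp)
        have : (g x && !g h2) = true := by simp [hxt, h2f]
        simp [this]

lemma countP_xor_ge (g : ℕ → Bool) (L : List (ℕ × ℕ)) :
    L.countP (fun q => !g q.1 && g q.2) + L.countP (fun q => g q.1 && !g q.2)
      ≤ L.countP (fun q => g q.1 != g q.2) := by
  induction L with
  | nil => simp
  | cons h tl ih =>
      simp only [List.countP_cons]
      cases hu : g h.1 <;> cases hv : g h.2 <;> simp [hu, hv] <;> omega

lemma two_cross (g : ℕ → Bool) (a : ℕ) (m : List ℕ)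
    (ha : g a = false) (hx : ∃ x ∈ m, g x = true) :
    2 ≤ crossCount g (a :: m ++ [a]) := by
  unfold crossCount
  have htail : (a :: (m ++ [a])).tail = m ++ [a] := rfl
  have hup : 1 ≤ ((a :: (m ++ [a])).zip (m ++ [a])).countP (fun q => !g q.1 && g q.2) := by
    apply up_cross g (m ++ [a]) a ha
    obtain ⟨x, hx1, hx2⟩ := hx
    exact ⟨x, List.mem_append_left _ hx1, hx2⟩
  have hdown : 1 ≤ ((a :: (m ++ [a])).zip (m ++ [a])).countP (fun q => g q.1 && !g q.2) := by
    apply down_cross g (m ++ [a]) a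
    · obtain ⟨x, hx1, hx2⟩ := hx
      exact ⟨x, by simp [hx1], hx2⟩
    · rw [List.getLastD_concat]; exact ha
  calc 2 ≤ ((a :: (m ++ [a])).zip (m ++ [a])).countP (fun q => !g q.1 && g q.2)
            + ((a :: (m ++ [a])).zip (m ++ [a])).countP (fun q => g q.1 && !g q.2) := by omega
    _ ≤ _ := by
        have := countP_xor_ge g ((a :: (m ++ [a])).zip (m ++ [a]))
        simpa [htail] using this

lemma sum_ge_two_countP {α : Type*} (L : List α) (P : α → Bool) (f : α → ℕ)
    (h : ∀ x ∈ L, P x = true → 2 ≤ f x) :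
    2 * L.countP P ≤ (L.map f).sum := by
  induction L with
  | nil => simp
  | cons a tl ih =>
      rw [List.countP_cons]
      simp only [List.map_cons, List.sum_cons]
      by_cases hP : P a = true
      · have := h a (by simp) hP
        have := ih (fun x hx => h x (by simp [hx]))
        simp [hP]; omega
      · have := ih (fun x hx => h x (by simp [hx]))
        simp [hP]; omega

lemma ceil_le_of_le_mul (k m s : ℕ) (hk : 1 ≤ k) (h : s ≤ m * k) :
    (s + k - 1) / k ≤ m := by
  rw [Nat.div_le_iff_le_mul_add_pred hk]
  have : k * m = m * k := Nat.mul_comm _ _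
  omega

lemma card_filter_le (n j : ℕ) (hj : j + 1 ≤ n) :
    (Finset.univ.filter (fun a : Fin n => (a : ℕ) ≤ j)).card = j + 1 := by
  have : (Finset.univ.filter (fun a : Fin n => (a : ℕ) ≤ j))
      = Finset.map ⟨Fin.castLE hj, Fin.castLE_injective hj⟩ Finset.univ := by
    ext a
    simp only [Finset.mem_filter, Finset.mem_univ, true_and, Finset.mem_map,
      Function.Embedding.coeFn_mk]
    constructor
    · intro h
      exact ⟨⟨(a : ℕ), by omega⟩, by ext; simp⟩
    · rintro ⟨b, _, rfl⟩
      simpa using Nat.lt_succ_iff.mp b.isLt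
  rw [this, Finset.card_map, Finset.card_univ, Fintype.card_fin]

lemma card_filter_gt (n j : ℕ) (hj : j + 1 ≤ n) :
    (Finset.univ.filter (fun a : Fin n => j < (a : ℕ))).card = n - j - 1 := by
  have hnot : (Finset.univ.filter (fun a : Fin n => j < (a : ℕ)))
      = Finset.univ.filter (fun a : Fin n => ¬ ((a : ℕ) ≤ j)) := by
    apply Finset.filter_congr
    intro a _
    exact not_le.symm
  have := Finset.card_filter_add_card_filter_not
    (s := (Finset.univ : Finset (Fin n))) (p := fun a : Fin n => (a : ℕ) ≤ j)
  rw [card_filter_le n j hj] at this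
  rw [hnot]
  simp only [Finset.card_univ, Fintype.card_fin] at this
  omega

lemma sum_map_mul {α : Type*} (L : List α) (f : α → ℕ) (d : ℝ) :
    (L.map (fun x => (f x : ℝ) * d)).sum = ((L.map f).sum : ℕ) * d := by
  induction L with
  | nil => simp
  | cons h tl ih => simp [ih, add_mul]

/-- Key counting lemma: a team `a` with `g a = false` whose trips must cover all
teams `b` with `g b = true` (each trip of length at most `k`) accumulates at least
`2⌈s/k⌉` crossings, where `s` is the number of teams with `g b = true`. -/
lemma key_count {n k : ℕ} (hk : 1 ≤ k) (g : ℕ → Bool) (a : Fin n)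
    (L : List (List (Fin n)))
    (hlen : ∀ tr ∈ L, tr.length ≤ k)
    (hcov : ∀ b : Fin n, g (b : ℕ) = true → ∃ tr ∈ L, b ∈ tr)
    (ha : g (a : ℕ) = false) (s : ℕ)
    (hs : s ≤ (Finset.univ.filter (fun b : Fin n => g (b : ℕ) = true)).card) :
    2 * ((s + k - 1) / k)
      ≤ (L.map (fun tr => crossCount g (((a : ℕ) :: tr.map Fin.val) ++ [(a : ℕ)]))).sum := by
  set P : List (Fin n) → Bool := fun tr => tr.any (fun b => g (b : ℕ)) with hP
  set m := L.countP P with hm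
  have h2m : 2 * m ≤ (L.map (fun tr => crossCount g (((a : ℕ) :: tr.map Fin.val) ++ [(a : ℕ)]))).sum := by
    apply sum_ge_two_countP
    intro tr _ htr
    rw [hP, List.any_eq_true] at htr
    obtain ⟨b, hbtr, hbg⟩ := htr
    have := two_cross g (a : ℕ) (tr.map Fin.val) ha
      ⟨(b : ℕ), List.mem_map.mpr ⟨b, hbtr, rfl⟩, hbg⟩
    simpa using this
  have hceil : (s + k - 1) / k ≤ m := by
    apply ceil_le_of_le_mul k m s hk
    set F := L.filter P with hF
    have hsub : (Finset.univ.filter (fun b : Fin n => g (b : ℕ) = true))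
        ⊆ F.flatten.toFinset := by
      intro b hb
      rw [Finset.mem_filter] at hb
      obtain ⟨tr, htr, hbtr⟩ := hcov b hb.2
      rw [List.mem_toFinset, List.mem_flatten]
      refine ⟨tr, ?_, hbtr⟩
      rw [hF, List.mem_filter]
      exact ⟨htr, by rw [hP]; exact List.any_eq_true.mpr ⟨b, hbtr, hb.2⟩⟩
    have h1 : s ≤ F.flatten.toFinset.card :=
      le_trans hs (Finset.card_le_card hsub)
    have h2 : F.flatten.toFinset.card ≤ F.flatten.length := List.toFinset_card_le _
    have h3 : F.flatten.length = (F.map List.length).sum := List.length_flatten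
    have h4 : (F.map List.length).sum ≤ (F.map List.length).length * k := by
      apply List.sum_le_card_nsmul
      intro x hx
      rw [List.mem_map] at hx
      obtain ⟨tr, htr, rfl⟩ := hx
      exact hlen tr (List.mem_of_mem_filter htr)
    have h5 : (F.map List.length).length = m := by
      rw [List.length_map, hF, ← List.countP_eq_length_filter]
    rw [h5] at h4
    omega
  omega

theorem stmt_16 (n k : ℕ) (hk : 1 ≤ k) (hn : 2 ≤ n)
    (t : ℕ → ℝ) (hmono : Monotone t)
    (trips : Fin n → List (List (Fin n)))
    (hlen : ∀ a, ∀ tr ∈ trips a, tr.length ≤ k)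
    (hne : ∀ a, ∀ tr ∈ trips a, ∀ b ∈ tr, b ≠ a)
    (hcover : ∀ a b : Fin n, a ≠ b → ∃ tr ∈ trips a, b ∈ tr) :
    ∑ i ∈ Finset.range (n - 1),
        ((2 * (i + 1) * ((n - i - 1 + k - 1) / k)
            + 2 * (n - i - 1) * ((i + 1 + k - 1) / k) : ℕ) : ℝ)
          * (t (i + 1) - t i)
      ≤ ∑ a : Fin n,
          ((trips a).map (fun tr =>
            lineWalkCost t (((a : ℕ) :: tr.map (Fin.val)) ++ [(a : ℕ)]))).sum := by
  have hd : ∀ j : ℕ, (0 : ℝ) ≤ t (j + 1) - t j :=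
    fun j => sub_nonneg.mpr (hmono (Nat.le_succ j))
  have hwalk : ∀ (a : Fin n) (tr : List (Fin n)), ∀ x ∈ ((a : ℕ) :: tr.map (Fin.val)) ++ [(a : ℕ)], x < n := by
    intro a tr x hx
    simp only [List.cons_append, List.mem_cons, List.mem_append, List.mem_map,
      List.mem_singleton, List.not_mem_nil, or_false] at hx
    rcases hx with rfl | ⟨⟨b, _, rfl⟩ | rfl⟩
    · exact a.isLt
    · exact b.isLt
    · exact a.isLt
  have hR : ∑ a : Fin n, ((trips a).map (fun tr =>
        lineWalkCost t (((a : ℕ) :: tr.map (Fin.val)) ++ [(a : ℕ)]))).sum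
      = ∑ j ∈ Finset.range (n - 1),
          ((∑ a : Fin n, ((trips a).map (fun tr =>
            crossCount (fun x => decide (j < x))
              (((a : ℕ) :: tr.map (Fin.val)) ++ [(a : ℕ)]))).sum : ℕ) : ℝ)
            * (t (j + 1) - t j) := by
    have step1 : ∀ a : Fin n, ((trips a).map (fun tr =>
          lineWalkCost t (((a : ℕ) :: tr.map (Fin.val)) ++ [(a : ℕ)]))).sum
        = ∑ j ∈ Finset.range (n - 1),
            (((trips a).map (fun tr =>
              crossCount (fun x => decide (j < x))
                (((a : ℕ) :: tr.map (Fin.val)) ++ [(a : ℕ)]))).sum : ℝ)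
              * (t (j + 1) - t j) := by
      intro a
      have h1 : ∀ tr ∈ trips a,
          lineWalkCost t (((a : ℕ) :: tr.map (Fin.val)) ++ [(a : ℕ)])
            = ∑ j ∈ Finset.range (n - 1),
                ((crossCount (fun x => decide (j < x))
                  (((a : ℕ) :: tr.map (Fin.val)) ++ [(a : ℕ)]) : ℕ) : ℝ)
                  * (t (j + 1) - t j) :=
        fun tr _ => lineWalkCost_eq n t hmono _ (hwalk a tr)
      rw [List.map_congr_left h1, sum_map_comm]
      exact Finset.sum_congr rfl fun j _ => sum_map_mul _ _ _
    calc ∑ a : Fin n, ((trips a).map (fun tr =>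
            lineWalkCost t (((a : ℕ) :: tr.map (Fin.val)) ++ [(a : ℕ)]))).sum
        = ∑ a : Fin n, ∑ j ∈ Finset.range (n - 1),
            (((trips a).map (fun tr =>
              crossCount (fun x => decide (j < x))
                (((a : ℕ) :: tr.map (Fin.val)) ++ [(a : ℕ)]))).sum : ℝ)
              * (t (j + 1) - t j) := Finset.sum_congr rfl fun a _ => step1 a
      _ = ∑ j ∈ Finset.range (n - 1), ∑ a : Fin n,
            (((trips a).map (fun tr =>
              crossCount (fun x => decide (j < x))
                (((a : ℕ) :: tr.map (Fin.val)) ++ [(a : ℕ)]))).sum : ℝ)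
              * (t (j + 1) - t j) := Finset.sum_comm
      _ = _ := by
          refine Finset.sum_congr rfl fun j _ => ?_
          rw [← Finset.sum_mul, Nat.cast_sum]
  rw [hR]
  apply Finset.sum_le_sum
  intro j hj
  rw [Finset.mem_range] at hj
  apply mul_le_mul_of_nonneg_right _ (hd j)
  rw [Nat.cast_le]
  set g : ℕ → Bool := fun x => decide (j < x) with hg
  set S : Fin n → ℕ := fun a => ((trips a).map (fun tr =>
      crossCount g (((a : ℕ) :: tr.map (Fin.val)) ++ [(a : ℕ)]))).sum with hS
  have hleft : ∀ a : Fin n, (a : ℕ) ≤ j → 2 * ((n - j - 1 + k - 1) / k) ≤ S a := by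
    intro a ha
    apply key_count hk g a (trips a) (hlen a)
    · intro b hb
      rw [hg] at hb
      simp only [decide_eq_true_eq] at hb
      exact hcover a b (by intro h; rw [h] at ha; omega)
    · rw [hg]; simp only [decide_eq_false_iff_not]; omega
    · have hcard : (Finset.univ.filter (fun b : Fin n => g (b : ℕ) = true)).card = n - j - 1 := by
        have : (Finset.univ.filter (fun b : Fin n => g (b : ℕ) = true))
            = Finset.univ.filter (fun b : Fin n => j < (b : ℕ)) := by
          apply Finset.filter_congr
          intro b _
          rw [hg]; simp
        rw [this, card_filter_gt n j (by omega)]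
      omega
  have hright : ∀ a : Fin n, j < (a : ℕ) → 2 * ((j + 1 + k - 1) / k) ≤ S a := by
    intro a ha
    set g' : ℕ → Bool := fun x => !(g x) with hg'
    have hb : ∀ x y : Bool, ((!x) != (!y)) = (x != y) := by decide
    have hccEq : ∀ l : List ℕ, crossCount g' l = crossCount g l := by
      intro l
      unfold crossCount
      rw [show (fun q : ℕ × ℕ => g' q.1 != g' q.2) = fun q => g q.1 != g q.2 from
        funext fun q => hb _ _]
    have := key_count hk g' a (trips a) (hlen a) ?_ ?_ (j + 1) ?_
    · rw [hS]
      calc 2 * ((j + 1 + k - 1) / k)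
          ≤ ((trips a).map (fun tr =>
              crossCount g' (((a : ℕ) :: tr.map Fin.val) ++ [(a : ℕ)]))).sum := this
        _ = _ := by
            congr 1
            exact List.map_congr_left fun tr _ => hccEq _
    · intro b hbb
      rw [hg', hg] at hbb
      simp only [Bool.not_eq_true', decide_eq_false_iff_not, Nat.not_lt] at hbb
      exact hcover a b (by intro h; rw [h] at ha; omega)
    · simp only [hg', hg, Bool.not_eq_false', decide_eq_true_eq]
      omega
    · have hcard : (Finset.univ.filter (fun b : Fin n => g' (b : ℕ) = true)).card = j + 1 := by
        have : (Finset.univ.filter (fun b : Fin n => g' (b : ℕ) = true))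
            = Finset.univ.filter (fun b : Fin n => (b : ℕ) ≤ j) := by
          apply Finset.filter_congr
          intro b _
          rw [hg', hg]
          simp [Nat.not_lt]
        rw [this, card_filter_le n j (by omega)]
      omega
  calc 2 * (j + 1) * ((n - j - 1 + k - 1) / k) + 2 * (n - j - 1) * ((j + 1 + k - 1) / k)
      = ∑ a : Fin n, (if (a : ℕ) ≤ j then 2 * ((n - j - 1 + k - 1) / k)
          else 2 * ((j + 1 + k - 1) / k)) := by
        rw [Finset.sum_ite, Finset.sum_const, Finset.sum_const, smul_eq_mul, smul_eq_mul]
        have e1 : (Finset.univ.filter (fun a : Fin n => (a : ℕ) ≤ j)).card = j + 1 :=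
          card_filter_le n j (by omega)
        have e2 : (Finset.univ.filter (fun a : Fin n => ¬ ((a : ℕ) ≤ j))).card = n - j - 1 := by
          have : (Finset.univ.filter (fun a : Fin n => ¬ ((a : ℕ) ≤ j)))
              = Finset.univ.filter (fun a : Fin n => j < (a : ℕ)) := by
            apply Finset.filter_congr
            intro a _
            simp [Nat.not_le]
          rw [this, card_filter_gt n j (by omega)]
        rw [e1, e2]
        ring
    _ ≤ ∑ a : Fin n, S a := by
        apply Finset.sum_le_sum
        intro a _
        by_cases hcase : (a : ℕ) ≤ j
        · simpa [hcase] using hleft a hcase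
        · simpa [hcase] using hright a (by omega)
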